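/- Let M be a finite monoid with zero element z, and let I be a 0-minimal ideal of M that is 0-simple. Then for any commutative unital ring K, the image of the K-span of I in the contracted monoid algebra K₀M := KM/(K·z) equals the image of the K-span of MeM for some nonzero idempotent e ∈ I, and this image is a projective left K₀M-module. -/

import Mathlib

set_option linter.unusedSectionVars false
set_option linter.unusedVariables false
set_option maxHeartbeats 1000000

def IsMulIdeal (S : Type) [Mul S] (I : Set S) : Prop :=
  I.Nonempty ∧ ∀ s x : S, x ∈ I → s * x ∈ I ∧ x * s ∈ I

/-- The minimal ideal of `S`: an ideal contained in every ideal. -/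
def IsMinimalMulIdeal (S : Type) [Mul S] (I : Set S) : Prop :=
  IsMulIdeal S I ∧ ∀ J : Set S, IsMulIdeal S J → I ⊆ J

/-- A subset `K` of `S` is a rectangular band if it is a nonempty subsemigroup
satisfying the identity `x * y * x = x`. -/
def IsRectangularBand (S : Type) [Mul S] (K : Set S) : Prop :=
  K.Nonempty ∧ (∀ x ∈ K, ∀ y ∈ K, x * y ∈ K) ∧ ∀ x ∈ K, ∀ y ∈ K, x * y * x = x

/-- The contracted monoid algebra `K₀M = KM/(K·z)` of a monoid with zero element `z`:
the quotient of the monoid algebra by the two-sided ideal generated by `z`. -/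
noncomputable def ContractedAlgebra (K : Type) [CommRing K] (M : Type) [Monoid M]
    (z : M) : Type :=
  (TwoSidedIdeal.span {MonoidAlgebra.single z (1 : K)}).ringCon.Quotient

noncomputable instance (K : Type) [CommRing K] (M : Type) [Monoid M] (z : M) :
    Ring (ContractedAlgebra K M z) :=
  inferInstanceAs (Ring (TwoSidedIdeal.span {MonoidAlgebra.single z (1 : K)}).ringCon.Quotient)

/-- The quotient map `KM → K₀M`. -/
noncomputable def contractedProj (K : Type) [CommRing K] (M : Type) [Monoid M] (z : M) :
    MonoidAlgebra K M →+* ContractedAlgebra K M z :=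
  (TwoSidedIdeal.span {MonoidAlgebra.single z (1 : K)}).ringCon.mk'

/-- The `K`-span of a subset `T ⊆ M` inside the monoid algebra `KM`. -/
noncomputable def kSpan (K : Type) [CommRing K] (M : Type) [Monoid M] (T : Set M) :
    Set (MonoidAlgebra K M) :=
  ↑(Submodule.span K ((fun m => MonoidAlgebra.single m (1 : K)) '' T))

/-! ### Auxiliary monoid lemmas -/

section MonoidAux

variable {M : Type} [Monoid M]

/-- In a finite monoid, some positive power of each element is idempotent. -/
lemma CIP.exists_idem_pow [Finite M] (a : M) :
    ∃ n : ℕ, 0 < n ∧ a ^ n * a ^ n = a ^ n := by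
  have key : ∀ i j : ℕ, i < j → a ^ (i + 1) = a ^ (j + 1) →
      ∃ n : ℕ, 0 < n ∧ a ^ n * a ^ n = a ^ n := by
    intro i j hlt hij
    set q := i + 1 with hq
    obtain ⟨p, hp, hjq⟩ : ∃ p, 0 < p ∧ j + 1 = q + p := ⟨j - i, by omega, by omega⟩
    have hqp : a ^ q * a ^ p = a ^ q := by rw [← pow_add, ← hjq, ← hij]
    have h1 : ∀ k : ℕ, a ^ q * (a ^ p) ^ k = a ^ q := by
      intro k; induction k with
      | zero => simp
      | succ n ih => rw [pow_succ' (a ^ p) n, ← mul_assoc, hqp, ih]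
    have hqle : q ≤ q * p := Nat.le_mul_of_pos_right q hp
    refine ⟨q * p, Nat.mul_pos (by omega) hp, ?_⟩
    obtain ⟨m, hm⟩ : ∃ m, q * p = q + m := ⟨q * p - q, by omega⟩
    calc a ^ (q * p) * a ^ (q * p) = a ^ (q + m) * (a ^ p) ^ q := by
          rw [← hm, mul_comm q p, pow_mul]
      _ = a ^ (q + m) := by rw [add_comm q m, pow_add, mul_assoc, h1 q]
      _ = a ^ (q * p) := by rw [hm]
  obtain ⟨i, j, hne, hij⟩ := Finite.exists_ne_map_eq_of_infinite (fun n : ℕ => a ^ (n + 1))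
  rcases Nat.lt_or_ge i j with h | h
  · exact key i j h hij
  · exact key j i (by omega) hij.symm

lemma CIP.iter_sandwich {x p q : M} (h : x = p * x * q) :
    ∀ k : ℕ, x = p ^ k * x * q ^ k := by
  intro k; induction k with
  | zero => simp
  | succ n ih =>
    calc x = p * x * q := h
      _ = p * (p ^ n * x * q ^ n) * q := by rw [← ih]
      _ = p ^ (n + 1) * x * q ^ (n + 1) := by
          rw [pow_succ' p n, pow_succ q n]; simp [mul_assoc]

lemma CIP.absorb_left {f x y : M} (hf : f * f = f) (h : x = f * y) : f * x = x := by
  rw [h, ← mul_assoc, hf]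

lemma CIP.pow_alt (β x : M) : ∀ n : ℕ, (β * x) ^ (n + 1) = β * ((x * β) ^ n * x) := by
  intro n; induction n with
  | zero => simp
  | succ n ih =>
    rw [pow_succ' (β * x) (n + 1), ih, pow_succ' (x * β) n]
    simp [mul_assoc]

variable {z : M} {I : Set M}

lemma CIP.zero_mem_ideal (hz : ∀ m : M, z * m = z ∧ m * z = z) (hI : IsMulIdeal M I) :
    z ∈ I := by
  obtain ⟨x, hx⟩ := hI.1
  have h := (hI.2 z x hx).1
  rwa [(hz x).1] at h

lemma CIP.MxM_eq (hI : IsMulIdeal M I)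
    (hmin2 : ∀ J : Set M, IsMulIdeal M J → J ⊆ I → J = {z} ∨ J = I)
    {x : M} (hx : x ∈ I) (hxz : x ≠ z) :
    {y : M | ∃ a b : M, y = a * x * b} = I := by
  set J : Set M := {y : M | ∃ a b : M, y = a * x * b} with hJ
  have hxJ : x ∈ J := ⟨1, 1, by simp⟩
  have hideal : IsMulIdeal M J := by
    refine ⟨⟨x, hxJ⟩, ?_⟩
    rintro s y ⟨a, b, rfl⟩
    exact ⟨⟨s * a, b, by simp [mul_assoc]⟩, ⟨a, b * s, by simp [mul_assoc]⟩⟩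
  have hsub : J ⊆ I := by
    rintro y ⟨a, b, rfl⟩
    exact (hI.2 b (a * x) (hI.2 a x hx).1).2
  rcases hmin2 J hideal hsub with h | h
  · exfalso; rw [h] at hxJ; exact hxz hxJ
  · exact h

lemma CIP.sandwich (hI : IsMulIdeal M I)
    (hmin2 : ∀ J : Set M, IsMulIdeal M J → J ⊆ I → J = {z} ∨ J = I)
    {x : M} (hx : x ∈ I) (hxz : x ≠ z) {y : M} (hy : y ∈ I) :
    ∃ a b : M, y = a * x * b := by
  have h := CIP.MxM_eq hI hmin2 hx hxz
  rw [← h] at hy; exact hy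

lemma CIP.exists_regular [Finite M] (hz : ∀ m : M, z * m = z ∧ m * z = z)
    (hI : IsMulIdeal M I)
    (hmin2 : ∀ J : Set M, IsMulIdeal M J → J ⊆ I → J = {z} ∨ J = I)
    (hab : ∃ a ∈ I, ∃ b ∈ I, a * b ≠ z)
    {x : M} (hx : x ∈ I) (hxz : x ≠ z) :
    ∃ v : M, x * v * x = x := by
  obtain ⟨a, ha, b, hb, hab⟩ := hab
  -- Step 1: some `x * u * x` is nonzero.
  have hu : ∃ u : M, x * u * x ≠ z := by
    by_contra h
    push_neg at h
    obtain ⟨p, q, hpq⟩ := CIP.sandwich hI hmin2 hx hxz ha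
    obtain ⟨p', q', hpq'⟩ := CIP.sandwich hI hmin2 hx hxz hb
    apply hab
    rw [hpq, hpq']
    calc p * x * q * (p' * x * q') = p * (x * (q * p') * x) * q' := by simp [mul_assoc]
      _ = p * z * q' := by rw [h (q * p')]
      _ = z := by rw [(hz p).2, (hz q').1]
  obtain ⟨u, hu⟩ := hu
  have hyI : x * u * x ∈ I := (hI.2 (x * u) x hx).1
  obtain ⟨γ, δ, hγδ⟩ := CIP.sandwich hI hmin2 hyI hu hx
  -- x = (γ * (x * u)) * x * δ
  have h1 : x = γ * (x * u) * x * δ := hγδ.trans (by simp [mul_assoc])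
  obtain ⟨k, hk, hidem⟩ := CIP.exists_idem_pow (γ * (x * u))
  have h2 := CIP.iter_sandwich h1 k
  have h3 : (γ * (x * u)) ^ k * x = x :=
    CIP.absorb_left hidem (h2.trans (mul_assoc _ _ _))
  obtain ⟨k', rfl⟩ : ∃ k', k = k' + 1 := ⟨k - 1, by omega⟩
  -- x = γ * x * (β * x) with β := u * (γ * (x*u))^k'
  have h4 : x = γ * x * ((u * (γ * (x * u)) ^ k') * x) := by
    have hA : (γ * (x * u)) ^ (k' + 1) = γ * (x * (u * (γ * (x * u)) ^ k')) := by
      rw [pow_succ' (γ * (x * u)) k']; simp [mul_assoc]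
    calc x = (γ * (x * u)) ^ (k' + 1) * x := h3.symm
      _ = (γ * (x * (u * (γ * (x * u)) ^ k'))) * x := by rw [hA]
      _ = γ * x * ((u * (γ * (x * u)) ^ k') * x) := by simp [mul_assoc]
  set β := u * (γ * (x * u)) ^ k' with hβ
  obtain ⟨m, hm, hidem2⟩ := CIP.exists_idem_pow γ
  have h5 := CIP.iter_sandwich h4 m
  have h6 : x = x * (β * x) ^ m := by
    have h7 : γ ^ m * x = x := CIP.absorb_left hidem2 (h5.trans (mul_assoc _ _ _))
    calc x = γ ^ m * x * (β * x) ^ m := h5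
      _ = x * (β * x) ^ m := by rw [h7]
  obtain ⟨m', rfl⟩ : ∃ m', m = m' + 1 := ⟨m - 1, by omega⟩
  refine ⟨β * (x * β) ^ m', ?_⟩
  calc x * (β * (x * β) ^ m') * x = x * (β * ((x * β) ^ m' * x)) := by simp [mul_assoc]
    _ = x * (β * x) ^ (m' + 1) := by rw [CIP.pow_alt]
    _ = x := h6.symm

/-- The `0`-minimal-left-ideal property: if `m * x ≠ z` then `x` is recovered from `m * x`. -/
lemma CIP.col_absorb [Finite M] (hI : IsMulIdeal M I)
    (hmin2 : ∀ J : Set M, IsMulIdeal M J → J ⊆ I → J = {z} ∨ J = I)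
    {x : M} (hx : x ∈ I) (hxz : x ≠ z) {m : M} (hmx : m * x ≠ z) :
    ∃ m' : M, m' * (m * x) = x := by
  have hyI : m * x ∈ I := (hI.2 m x hx).1
  obtain ⟨u, v, huv⟩ := CIP.sandwich hI hmin2 hyI hmx hx
  have h1 : x = (u * m) * x * v := huv.trans (by simp [mul_assoc])
  obtain ⟨k, hk, hidem⟩ := CIP.exists_idem_pow (u * m)
  have h2 := CIP.iter_sandwich h1 k
  have h3 : (u * m) ^ k * x = x := CIP.absorb_left hidem (h2.trans (mul_assoc _ _ _))
  obtain ⟨k', rfl⟩ : ∃ k', k = k' + 1 := ⟨k - 1, by omega⟩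
  refine ⟨(u * m) ^ k' * u, ?_⟩
  calc (u * m) ^ k' * u * (m * x) = (u * m) ^ (k' + 1) * x := by
        rw [pow_succ (u * m) k']; simp [mul_assoc]
    _ = x := h3

/-- Left columns (`L`-classes together with zero). -/
def CIP.col (x : M) : Set M := {y : M | ∃ m : M, y = m * x}

lemma CIP.mem_col {x y : M} : y ∈ CIP.col x ↔ ∃ m : M, y = m * x := Iff.rfl

end MonoidAux

/-! ### Auxiliary algebra lemmas -/

section AlgebraAux

open Pointwise

variable {K : Type} [CommRing K] {M : Type} [Monoid M] {z : M}

lemma CIP.pi_surj : Function.Surjective (contractedProj K M z) :=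
  fun q => Quotient.inductionOn' q (fun w => ⟨w, rfl⟩)

lemma CIP.pi_eq_iff (u v : MonoidAlgebra K M) :
    contractedProj K M z u = contractedProj K M z v ↔
      (TwoSidedIdeal.span {MonoidAlgebra.single z (1 : K)}).ringCon u v :=
  RingCon.eq _

lemma CIP.mem_kSpan_iff (T : Set M) (w : MonoidAlgebra K M) :
    w ∈ kSpan K M T ↔ ↑w.coeff.support ⊆ T := by
  have h : Submodule.span K ((fun m => MonoidAlgebra.single m (1 : K)) '' T)
      = MonoidAlgebra.supported K K T := (MonoidAlgebra.supported_eq_span_single (R := K) (s := T)).symm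
  rw [kSpan, SetLike.mem_coe, h, MonoidAlgebra.mem_supported]

lemma CIP.smul_eq_single_one_mul (k : K) (w : MonoidAlgebra K M) :
    k • w = MonoidAlgebra.single (1 : M) k * w := by
  rw [Algebra.smul_def]; simp

lemma CIP.mul_single_z_left (hz : ∀ m : M, z * m = z ∧ m * z = z)
    (k : K) (x : MonoidAlgebra K M) :
    ∃ c : K, x * MonoidAlgebra.single z k = MonoidAlgebra.single z c := by
  classical
  induction x using MonoidAlgebra.induction with
  | zero => exact ⟨0, by simp⟩
  | single_add a b f haf hb ih =>
    obtain ⟨c, hc⟩ := ih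
    refine ⟨b * k + c, ?_⟩
    rw [add_mul, hc, MonoidAlgebra.single_mul_single, (hz a).2, MonoidAlgebra.single_add]

lemma CIP.mul_single_z_right (hz : ∀ m : M, z * m = z ∧ m * z = z)
    (k : K) (x : MonoidAlgebra K M) :
    ∃ c : K, MonoidAlgebra.single z k * x = MonoidAlgebra.single z c := by
  classical
  induction x using MonoidAlgebra.induction with
  | zero => exact ⟨0, by simp⟩
  | single_add a b f haf hb ih =>
    obtain ⟨c, hc⟩ := ih
    refine ⟨k * b + c, ?_⟩
    rw [mul_add, hc, MonoidAlgebra.single_mul_single, (hz a).1, MonoidAlgebra.single_add]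

lemma CIP.mem_span_single_z (hz : ∀ m : M, z * m = z ∧ m * z = z)
    (w : MonoidAlgebra K M) :
    w ∈ TwoSidedIdeal.span {MonoidAlgebra.single z (1 : K)} ↔
      ∃ k : K, w = MonoidAlgebra.single z k := by
  constructor
  · intro hw
    rw [TwoSidedIdeal.mem_span_iff_mem_addSubgroup_closure] at hw
    let ZS : AddSubgroup (MonoidAlgebra K M) :=
      { carrier := {w | ∃ k : K, w = MonoidAlgebra.single z k}
        zero_mem' := ⟨0, by simp⟩
        add_mem' := by
          rintro x y ⟨k1, rfl⟩ ⟨k2, rfl⟩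
          exact ⟨k1 + k2, by rw [MonoidAlgebra.single_add]⟩
        neg_mem' := by
          rintro x ⟨k1, rfl⟩
          exact ⟨-k1, by simp⟩ }
    have hle : AddSubgroup.closure
        (Set.univ * {MonoidAlgebra.single z (1 : K)} * Set.univ) ≤ ZS := by
      rw [AddSubgroup.closure_le]
      rintro x ⟨y, ⟨a, -, g, hg, rfl⟩, b, -, rfl⟩
      rw [Set.mem_singleton_iff] at hg
      subst hg
      show (a * MonoidAlgebra.single z (1 : K)) * b ∈ (ZS : Set (MonoidAlgebra K M))
      obtain ⟨c, hc⟩ := CIP.mul_single_z_left hz (1 : K) a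
      rw [hc]
      exact CIP.mul_single_z_right hz c b
    exact hle hw
  · rintro ⟨k, rfl⟩
    have h1 : MonoidAlgebra.single z k
        = MonoidAlgebra.single (1 : M) k * MonoidAlgebra.single z (1 : K) := by
      rw [MonoidAlgebra.single_mul_single, one_mul, mul_one]
    rw [h1]
    exact TwoSidedIdeal.mul_mem_left _ _ _ (TwoSidedIdeal.subset_span rfl)

lemma CIP.pi_eq_zero_iff (hz : ∀ m : M, z * m = z ∧ m * z = z)
    (w : MonoidAlgebra K M) :
    contractedProj K M z w = 0 ↔ ∃ k : K, w = MonoidAlgebra.single z k := by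
  have h0 : (0 : ContractedAlgebra K M z) = contractedProj K M z 0 := (map_zero _).symm
  rw [h0, CIP.pi_eq_iff, TwoSidedIdeal.rel_iff, sub_zero, CIP.mem_span_single_z hz]

end AlgebraAux

/-! ### The main construction -/

open Pointwise in
theorem CIP.main_aux {M : Type} [Monoid M] [Finite M] {z : M}
    (hz : ∀ m : M, z * m = z ∧ m * z = z)
    {I : Set M} (hI : IsMulIdeal M I)
    (hmin2 : ∀ J : Set M, IsMulIdeal M J → J ⊆ I → J = {z} ∨ J = I)
    (hab : ∃ a ∈ I, ∃ b ∈ I, a * b ≠ z)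
    (K : Type) [CommRing K] :
    ∃ S : Submodule (ContractedAlgebra K M z) (ContractedAlgebra K M z),
      (S : Set (ContractedAlgebra K M z)) = (contractedProj K M z) '' (kSpan K M I) ∧
        Module.Projective (ContractedAlgebra K M z) ↥S := by
  classical
  set π := contractedProj K M z with hπ
  -- closure of the K-span of I under left multiplication
  have hVmul : ∀ w v : MonoidAlgebra K M, v ∈ kSpan K M I → w * v ∈ kSpan K M I := by
    intro w v hv
    rw [CIP.mem_kSpan_iff] at hv ⊢
    intro m hm
    have hmem := MonoidAlgebra.support_coeff_mul_subset w v hm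
    obtain ⟨m1, hm1, m2, hm2, rfl⟩ := Finset.mem_mul.mp hmem
    exact (hI.2 m1 m2 (hv hm2)).1
  -- the submodule S
  let S : Submodule (ContractedAlgebra K M z) (ContractedAlgebra K M z) :=
    { carrier := π '' kSpan K M I
      zero_mem' := ⟨0, (CIP.mem_kSpan_iff I 0).mpr (by simp), map_zero _⟩
      add_mem' := by
        rintro x y ⟨w1, hw1, rfl⟩ ⟨w2, hw2, rfl⟩
        refine ⟨w1 + w2, ?_, map_add _ _ _⟩
        rw [CIP.mem_kSpan_iff] at hw1 hw2 ⊢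
        intro m hm
        rcases Finset.mem_union.mp (Finsupp.support_add hm) with h | h
        · exact hw1 h
        · exact hw2 h
      smul_mem' := by
        rintro r x ⟨w, hw, rfl⟩
        obtain ⟨u, rfl⟩ := CIP.pi_surj r
        exact ⟨u * w, hVmul u w hw, (map_mul π u w).symm⟩ }
  refine ⟨S, rfl, ?_⟩
  -- columns
  have hcol_self : ∀ x : M, x ∈ CIP.col x := fun x => ⟨1, (one_mul x).symm⟩
  have hcol_eq : ∀ x, x ∈ I → x ≠ z → ∀ y, y ≠ z → y ∈ CIP.col x →
      CIP.col y = CIP.col x := by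
    intro x hx hxz y hyz hymem
    obtain ⟨m, rfl⟩ := CIP.mem_col.mp hymem
    ext w
    rw [CIP.mem_col, CIP.mem_col]
    constructor
    · rintro ⟨n, rfl⟩; exact ⟨n * m, by rw [mul_assoc]⟩
    · rintro ⟨n, rfl⟩
      obtain ⟨m', hm'⟩ := CIP.col_absorb hI hmin2 hx hxz hyz
      exact ⟨n * m', by rw [mul_assoc, hm']⟩
  set Jset : Set (Set M) := {L | ∃ x : M, (x ∈ I ∧ x ≠ z) ∧ L = CIP.col x} with hJset
  haveI : Fintype ↥Jset := Fintype.ofFinite _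
  -- representatives
  have hrep : ∀ j : ↥Jset, ∃ x : M, (x ∈ I ∧ x ≠ z) ∧ (j : Set M) = CIP.col x :=
    fun j => j.2
  choose xr hxr1 hxr2 using hrep
  have hreg : ∀ j : ↥Jset, ∃ v : M, xr j * v * xr j = xr j := fun j =>
    CIP.exists_regular hz hI hmin2 hab (hxr1 j).1 (hxr1 j).2
  choose vr hvr using hreg
  -- images in the contracted algebra
  set xbar : ↥Jset → ContractedAlgebra K M z :=
    fun j => π (MonoidAlgebra.single (xr j) 1) with hxbar
  set vbar : ↥Jset → ContractedAlgebra K M z :=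
    fun j => π (MonoidAlgebra.single (vr j) 1) with hvbar
  have hfx : ∀ j, (xbar j * vbar j) * xbar j = xbar j := by
    intro j
    show (π (MonoidAlgebra.single (xr j) 1) * π (MonoidAlgebra.single (vr j) 1))
        * π (MonoidAlgebra.single (xr j) 1) = π (MonoidAlgebra.single (xr j) 1)
    rw [← map_mul, ← map_mul, MonoidAlgebra.single_mul_single,
      MonoidAlgebra.single_mul_single, one_mul, one_mul, hvr j]
  -- the free module and the maps
  let pF : (↥Jset → ContractedAlgebra K M z) →ₗ[ContractedAlgebra K M z]
      ContractedAlgebra K M z :=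
    { toFun := fun r => ∑ j, r j * xbar j
      map_add' := by intro r s; simp [add_mul, Finset.sum_add_distrib]
      map_smul' := by intro c r; simp [smul_eq_mul, Finset.mul_sum, mul_assoc] }
  let Phi : (↥Jset → ContractedAlgebra K M z) →ₗ[ContractedAlgebra K M z]
      (↥Jset → ContractedAlgebra K M z) :=
    { toFun := fun r j => r j * (xbar j * vbar j)
      map_add' := by intro r s; funext j; simp [add_mul]
      map_smul' := by intro c r; funext j; simp [smul_eq_mul, mul_assoc] }
  have hpF_apply : ∀ r, pF r = ∑ j, r j * xbar j := fun r => rfl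
  have hPhi_apply : ∀ r j, Phi r j = r j * (xbar j * vbar j) := fun r j => rfl
  have hxbar_mem : ∀ j, xbar j ∈ S := by
    intro j
    refine ⟨MonoidAlgebra.single (xr j) 1, ?_, rfl⟩
    rw [CIP.mem_kSpan_iff]
    intro m hm
    have hsing := Finsupp.support_single_subset hm
    rw [Finset.mem_singleton] at hsing
    subst hsing
    exact (hxr1 j).1
  have hpF_mem : ∀ r, pF r ∈ S := by
    intro r
    rw [hpF_apply]
    exact Submodule.sum_mem S (fun j _ => S.smul_mem (r j) (hxbar_mem j))
  let p : (↥Jset → ContractedAlgebra K M z) →ₗ[ContractedAlgebra K M z] ↥S :=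
    LinearMap.codRestrict S pF hpF_mem
  -- surjectivity of pF onto S
  have hwit : ∀ w ∈ kSpan K M I, ∃ r, pF r = π w := by
    intro w hw
    rw [kSpan, SetLike.mem_coe] at hw
    induction hw using Submodule.span_induction with
    | mem v hv =>
      obtain ⟨y, hy, hveq⟩ := hv
      have hv' : v = MonoidAlgebra.single y (1 : K) := hveq.symm
      subst hv'
      by_cases hyz : y = z
      · subst hyz
        refine ⟨0, ?_⟩
        rw [map_zero]
        exact ((CIP.pi_eq_zero_iff hz _).mpr ⟨1, rfl⟩).symm
      · have hcolJ : CIP.col y ∈ Jset := ⟨y, ⟨hy, hyz⟩, rfl⟩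
        set j : ↥Jset := ⟨CIP.col y, hcolJ⟩ with hj
        have hycol : y ∈ CIP.col (xr j) := by
          rw [← hxr2 j]
          exact hcol_self y
        obtain ⟨m, hm⟩ := CIP.mem_col.mp hycol
        refine ⟨Pi.single j (π (MonoidAlgebra.single m 1)), ?_⟩
        rw [hpF_apply]
        rw [Finset.sum_eq_single j
          (fun b _ hb => by rw [Pi.single_eq_of_ne hb, zero_mul])
          (fun h => absurd (Finset.mem_univ j) h)]
        rw [Pi.single_eq_same]
        show π (MonoidAlgebra.single m 1) * π (MonoidAlgebra.single (xr j) 1)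
            = π (MonoidAlgebra.single y 1)
        rw [← map_mul, MonoidAlgebra.single_mul_single, one_mul, ← hm]
    | zero => exact ⟨0, by rw [map_zero, map_zero]⟩
    | add v w hv' hw' ihv ihw =>
      obtain ⟨r1, hr1⟩ := ihv
      obtain ⟨r2, hr2⟩ := ihw
      exact ⟨r1 + r2, by rw [map_add, map_add, hr1, hr2]⟩
    | smul k v hv' ihv =>
      obtain ⟨r, hr⟩ := ihv
      refine ⟨π (MonoidAlgebra.single (1 : M) k) • r, ?_⟩
      rw [map_smul, hr, smul_eq_mul, ← map_mul, ← CIP.smul_eq_single_one_mul]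
  -- directness of the column decomposition
  have hdirect : ∀ (t : ↥Jset → ContractedAlgebra K M z)
      (w : ↥Jset → MonoidAlgebra K M),
      (∀ j, ↑(w j).coeff.support ⊆ CIP.col (xr j) \ {z} ∧ π (w j) = t j) →
      (∑ j, t j) = 0 → ∀ j, t j = 0 := by
    intro t w hw hsum j0
    have h1 : π (∑ j, w j) = 0 := by
      rw [map_sum]
      calc ∑ j, π (w j) = ∑ j, t j := Finset.sum_congr rfl (fun j _ => (hw j).2)
        _ = 0 := hsum
    obtain ⟨k, hk⟩ := (CIP.pi_eq_zero_iff hz _).mp h1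
    have hwj0 : w j0 = 0 := by
      ext y
      by_contra hy0
      have hy : y ∈ CIP.col (xr j0) \ {z} := (hw j0).1 (Finsupp.mem_support_iff.mpr hy0)
      have hyz : y ≠ z := hy.2
      have hothers : ∀ j : ↥Jset, j ≠ j0 → (w j).coeff y = 0 := by
        intro j hj
        by_contra h
        have hy' : y ∈ CIP.col (xr j) \ {z} := (hw j).1 (Finsupp.mem_support_iff.mpr h)
        apply hj
        have e1 : CIP.col y = CIP.col (xr j) :=
          hcol_eq (xr j) (hxr1 j).1 (hxr1 j).2 y hyz hy'.1
        have e2 : CIP.col y = CIP.col (xr j0) :=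
          hcol_eq (xr j0) (hxr1 j0).1 (hxr1 j0).2 y hyz hy.1
        apply Subtype.ext
        rw [hxr2 j, hxr2 j0, ← e1, ← e2]
      have hsum_y : (∑ j, w j).coeff y = (w j0).coeff y := by
        rw [MonoidAlgebra.coeff_sum, Finsupp.finset_sum_apply]
        exact Finset.sum_eq_single j0 (fun b _ hb => hothers b hb)
          (fun h => absurd (Finset.mem_univ j0) h)
      rw [hk] at hsum_y
      have hz_y : (MonoidAlgebra.single z k : MonoidAlgebra K M).coeff y = 0 :=
        Finsupp.single_eq_of_ne' (Ne.symm hyz)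
      rw [hz_y] at hsum_y
      exact hy0 hsum_y.symm
    rw [← (hw j0).2, hwj0, map_zero]
  -- every `c * xbar j` comes from a column-supported element
  have ht_mem : ∀ (c : ContractedAlgebra K M z) (j : ↥Jset),
      ∃ w : MonoidAlgebra K M,
        ↑w.coeff.support ⊆ CIP.col (xr j) \ {z} ∧ π w = c * xbar j := by
    intro c j
    obtain ⟨u, rfl⟩ := CIP.pi_surj c
    set w0 : MonoidAlgebra K M := u * MonoidAlgebra.single (xr j) 1 with hw0
    have hsupp : ↑w0.coeff.support ⊆ CIP.col (xr j) := by
      intro m hm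
      have hmem := MonoidAlgebra.support_coeff_mul_subset u (MonoidAlgebra.single (xr j) 1) hm
      obtain ⟨m1, hm1, m2, hm2, rfl⟩ := Finset.mem_mul.mp hmem
      have hsing := Finsupp.support_single_subset hm2
      rw [Finset.mem_singleton] at hsing
      subst hsing
      exact ⟨m1, rfl⟩
    set d : MonoidAlgebra K M := w0 - MonoidAlgebra.single z (w0.coeff z) with hd
    have hdapply : ∀ m2 : M, d.coeff m2
        = w0.coeff m2 - (MonoidAlgebra.single z (w0.coeff z) : MonoidAlgebra K M).coeff m2 :=
      fun m2 => Finsupp.sub_apply _ _ _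
    refine ⟨d, ?_, ?_⟩
    · intro m hm
      have hm' : d.coeff m ≠ 0 := Finsupp.mem_support_iff.mp hm
      by_cases hmz : m = z
      · exfalso; apply hm'; subst hmz
        rw [hdapply, MonoidAlgebra.coeff_single, Finsupp.single_eq_same, sub_self]
      · refine ⟨?_, hmz⟩
        apply hsupp
        rw [Finset.mem_coe, Finsupp.mem_support_iff]
        intro h0
        apply hm'
        rw [hdapply, h0, MonoidAlgebra.coeff_single, Finsupp.single_eq_of_ne' (Ne.symm hmz), sub_zero]
    · have hπd : π d = π w0 := by
        rw [hd, map_sub, (CIP.pi_eq_zero_iff hz _).mpr ⟨w0.coeff z, rfl⟩, sub_zero]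
      rw [hπd, hw0]
      exact map_mul π u _
  -- injectivity on the range of Phi
  have hinj : ∀ r : ↥Jset → ContractedAlgebra K M z, pF (Phi r) = 0 → Phi r = 0 := by
    intro r hr0
    have h0 : pF (Phi r) = ∑ j, r j * xbar j := by
      rw [hpF_apply]
      refine Finset.sum_congr rfl (fun j _ => ?_)
      rw [hPhi_apply, mul_assoc, hfx j]
    have hsum : (∑ j, r j * xbar j) = 0 := by rw [← h0, hr0]
    choose w hw1 hw2 using (fun j => ht_mem (r j) j)
    have hzero : ∀ j, r j * xbar j = 0 :=
      hdirect (fun j => r j * xbar j) w (fun j => ⟨hw1 j, hw2 j⟩) hsum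
    funext j
    show r j * (xbar j * vbar j) = (0 : ↥Jset → ContractedAlgebra K M z) j
    rw [Pi.zero_apply, ← mul_assoc, hzero j, zero_mul]
  -- the splitting
  have hpF_Phi : ∀ r, pF (Phi r) = pF r := by
    intro r
    rw [hpF_apply, hpF_apply]
    refine Finset.sum_congr rfl (fun j _ => ?_)
    rw [hPhi_apply, mul_assoc, hfx j]
  let G := LinearMap.range Phi
  let pG : ↥G →ₗ[ContractedAlgebra K M z] ↥S := p.comp G.subtype
  have hbij : Function.Bijective pG := by
    constructor
    · rw [← LinearMap.ker_eq_bot, LinearMap.ker_eq_bot']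
      rintro ⟨g, hg⟩ hg0
      obtain ⟨r, rfl⟩ := hg
      have hval : pF (Phi r) = 0 := congrArg Subtype.val hg0
      exact Subtype.ext (hinj r hval)
    · intro s
      have hmem : (↑s : ContractedAlgebra K M z) ∈ π '' kSpan K M I := s.2
      obtain ⟨ws, hws, hwseq⟩ := hmem
      obtain ⟨r, hr⟩ := hwit ws hws
      refine ⟨⟨Phi r, LinearMap.mem_range_self Phi r⟩, ?_⟩
      apply Subtype.ext
      show pF (Phi r) = ↑s
      rw [hpF_Phi, hr, hwseq]
  let eiso := LinearEquiv.ofBijective pG hbij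
  let i : ↥S →ₗ[ContractedAlgebra K M z] (↥Jset → ContractedAlgebra K M z) :=
    G.subtype.comp (eiso.symm : ↥S →ₗ[ContractedAlgebra K M z] ↥G)
  have hsplit : p.comp i = LinearMap.id := by
    ext s
    exact congrArg Subtype.val (eiso.apply_symm_apply s)
  exact Module.Projective.of_split i p hsplit

/-- Let `M` be a finite monoid with zero `z` and `I` a `0`-minimal ideal of `M` that is
`0`-simple.  Then for any commutative ring `K`, the image of the `K`-span of `I` in the
contracted algebra `K₀M` equals the image of the `K`-span of `MeM` for some nonzero
idempotent `e ∈ I`, and this image is a projective left `K₀M`-module. -/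
theorem contracted_ideal_projective (M : Type) [Monoid M] [Finite M] (z : M)
    (hz : ∀ m : M, z * m = z ∧ m * z = z)
    (I : Set M) (hI : IsMulIdeal M I)
    (hmin : I ≠ {z} ∧ ∀ J : Set M, IsMulIdeal M J → J ⊆ I → J = {z} ∨ J = I)
    (hsimple : (∃ a ∈ I, ∃ b ∈ I, a * b ≠ z) ∧
      ∀ J : Set M, J ⊆ I → J.Nonempty →
        (∀ s ∈ I, ∀ x ∈ J, s * x ∈ J ∧ x * s ∈ J) → J = {z} ∨ J = I)
    (K : Type) [CommRing K] :
    ∃ e ∈ I, e ≠ z ∧ IsIdempotentElem e ∧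
      (contractedProj K M z) '' (kSpan K M I) =
        (contractedProj K M z) '' (kSpan K M {x : M | ∃ a b : M, x = a * e * b}) ∧
      ∃ S : Submodule (ContractedAlgebra K M z) (ContractedAlgebra K M z),
        (S : Set (ContractedAlgebra K M z)) = (contractedProj K M z) '' (kSpan K M I) ∧
          Module.Projective (ContractedAlgebra K M z) ↥S := by
  obtain ⟨a, ha, b, hb, hab⟩ := hsimple.1
  have haz : a ≠ z := by
    intro h
    exact hab (by rw [h, (hz b).1])
  obtain ⟨v, hv⟩ := CIP.exists_regular hz hI hmin.2 hsimple.1 ha haz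
  have heI : a * v ∈ I := (hI.2 v a ha).2
  have hea : (a * v) * a = a := hv
  have hee : IsIdempotentElem (a * v) := by
    show (a * v) * (a * v) = a * v
    rw [← mul_assoc, hea]
  have hez : a * v ≠ z := by
    intro h
    apply haz
    rw [← hea, h, (hz a).1]
  refine ⟨a * v, heI, hez, hee, ?_, ?_⟩
  · rw [CIP.MxM_eq hI hmin.2 heI hez]
  · exact CIP.main_aux hz hI hmin.2 hsimple.1 K
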